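/- In the greedy coloring of the cover graph of a uniquely generated finite poset along a linear extension, if a vertex v receives color k with k ≥ 2, then there exist elements u₁, ..., u_{k-1} each covered by v such that u_i received color i for each i = 1, ..., k-1, and the down-sets T(u₁), ..., T(u_{k-1}) are pairwise disjoint. -/

import Mathlib

/-- A poset is uniquely generated if every comparable pair `x < y` is connected
by a unique covering chain. -/
def UniquelyGenerated (α : Type*) [PartialOrder α] : Prop :=
  ∀ x y : α, x < y →
    ∃! l : List α, List.Chain (· ⋖ ·) x l ∧ l.getLast? = some y

/-- `c` is the greedy coloring along a linear extension: each vertex `v` gets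
the least positive integer not used on the set of elements covered by `v`. -/
def IsGreedyColoring (α : Type*) [PartialOrder α] (c : α → ℕ) : Prop :=
  ∀ v : α, c v = sInf {k : ℕ | 1 ≤ k ∧ ∀ u : α, u ⋖ v → c u ≠ k}

private lemma chain_concat' {α : Type*} {r : α → α → Prop} :
    ∀ {x : α} {l : List α} {u v : α}, List.Chain r x l → (x :: l).getLast? = some u → r u v →
      List.Chain r x (l ++ [v]) := by
  intro x l
  induction l generalizing x with
  | nil =>
    intro u v _ h hr
    simp only [List.getLast?_singleton, Option.some.injEq] at h
    subst h
    simpa [List.Chain] using hr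
  | cons a l ih =>
    intro u v hch hlast hr
    rw [List.Chain, List.chain_cons] at hch
    simp only [List.Chain, List.cons_append, List.chain_cons]
    refine ⟨hch.1, ih hch.2 ?_ hr⟩
    rwa [List.getLast?_cons_cons] at hlast

private lemma getLast?_cons_of_some {α : Type*} {l : List α} {x m : α}
    (h : l.getLast? = some m) : (x :: l).getLast? = some m := by
  cases l with
  | nil => simp at h
  | cons a l => rwa [List.getLast?_cons_cons]

private lemma exists_chain' {α : Type*} [Fintype α] [PartialOrder α] :
    ∀ x y : α, x < y → ∃ l : List α, List.Chain (· ⋖ ·) x l ∧ l.getLast? = some y := by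
  intro x
  induction x using WellFounded.induction (wellFounded_gt (α := α)) with
  | _ x ih =>
    intro y hxy
    obtain ⟨z, hxz, hzy⟩ := exists_covBy_le_of_lt hxy
    rcases eq_or_lt_of_le hzy with rfl | hlt
    · exact ⟨[z], by simpa [List.Chain] using hxz, rfl⟩
    · obtain ⟨l, hl, hlast⟩ := ih z hxz.lt y hlt
      exact ⟨z :: l, List.chain_cons.2 ⟨hxz, hl⟩, getLast?_cons_of_some hlast⟩

/-- If a vertex `v` receives color `k ≥ 2` in the greedy coloring, then there
are elements `u₁, …, u_{k-1}` covered by `v`, with `u_i` colored `i`, whose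
down-sets `T(u_i)` are pairwise disjoint. -/
theorem stmt3 (α : Type*) [Fintype α] [PartialOrder α]
    (hug : UniquelyGenerated α) (c : α → ℕ) (hc : IsGreedyColoring α c)
    (v : α) (k : ℕ) (hk : c v = k) (hk2 : 2 ≤ k) :
    ∃ u : Fin (k - 1) → α,
      (∀ i, u i ⋖ v ∧ c (u i) = (i : ℕ) + 1) ∧
      (∀ i j, i ≠ j →
        Disjoint {w : α | w ≤ u i} {w : α | w ≤ u j}) := by
  have hS : ∀ i : ℕ, 1 ≤ i → i < k → ∃ u : α, u ⋖ v ∧ c u = i := by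
    intro i h1 hik
    by_contra h
    push_neg at h
    have hmem : i ∈ {m : ℕ | 1 ≤ m ∧ ∀ u : α, u ⋖ v → c u ≠ m} :=
      ⟨h1, fun u hu => h u hu⟩
    have hle := Nat.sInf_le hmem
    rw [← hc v, hk] at hle
    omega
  choose! u hu1 hu2 using fun i : Fin (k - 1) =>
    hS ((i : ℕ) + 1) (by omega) (by have := i.2; omega)
  refine ⟨u, fun i => ⟨hu1 i, hu2 i⟩, ?_⟩
  intro i j hij
  rw [Set.disjoint_left]
  intro w hwi hwj
  simp only [Set.mem_setOf_eq] at hwi hwj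
  have hne : u i ≠ u j := by
    intro h
    apply hij
    have : (i : ℕ) + 1 = (j : ℕ) + 1 := by rw [← hu2 i, ← hu2 j, h]
    exact Fin.ext (by omega)
  have hwv : w < v := lt_of_le_of_lt hwi (hu1 i).lt
  have build : ∀ m : α, m ⋖ v → w ≤ m →
      ∃ L : List α, List.Chain (· ⋖ ·) w (L ++ [v]) ∧ (w :: L).getLast? = some m := by
    intro m hm hwm
    rcases eq_or_lt_of_le hwm with rfl | hlt
    · exact ⟨[], by simpa [List.Chain] using hm, rfl⟩
    · obtain ⟨L, hL, hLlast⟩ := exists_chain' w m hlt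
      exact ⟨L, chain_concat' hL (getLast?_cons_of_some hLlast) hm,
        getLast?_cons_of_some hLlast⟩
  obtain ⟨Li, hLi, hLi2⟩ := build (u i) (hu1 i) hwi
  obtain ⟨Lj, hLj, hLj2⟩ := build (u j) (hu1 j) hwj
  have heq : Li ++ [v] = Lj ++ [v] :=
    (hug w v hwv).unique ⟨hLi, List.getLast?_concat⟩ ⟨hLj, List.getLast?_concat⟩
  have hLL : Li = Lj := List.append_cancel_right heq
  apply hne
  have : (w :: Li).getLast? = (w :: Lj).getLast? := by rw [hLL]
  rw [hLi2, hLj2] at this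
  exact Option.some.inj this
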